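/- Let S be a commutative monoid. Then every projective right S-act is free if and only if E(S) = {1}, where E(S) is the set of idempotents of S. -/

import Mathlib

universe u

/-- A (right) `S`-act: a set `A` with an action `a·s` satisfying `a·1 = a` and
`a·(st) = (a·s)·t`. -/
structure SAct (S : Type u) [Monoid S] : Type (u + 1) where
  carrier : Type u
  act : carrier → S → carrier
  act_one : ∀ a, act a 1 = a
  act_mul : ∀ a s t, act a (s * t) = act (act a s) t

/-- A morphism of `S`-acts: a map `f` with `f(a·s) = f(a)·s`. -/
def IsActHom {S : Type u} [Monoid S] (A B : SAct S) (f : A.carrier → B.carrier) : Prop :=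
  ∀ (a : A.carrier) (s : S), f (A.act a s) = B.act (f a) s

/-- An `S`-act `P` is projective if for every surjective `S`-act morphism `g : B → C` and
every `S`-act morphism `f : P → C` there is an `S`-act morphism `h : P → B` with
`g ∘ h = f`. -/
def IsProjectiveAct {S : Type u} [Monoid S] (P : SAct S) : Prop :=
  ∀ (B C : SAct S) (g : B.carrier → C.carrier), IsActHom B C g → Function.Surjective g →
    ∀ f : P.carrier → C.carrier, IsActHom P C f →
      ∃ h : P.carrier → B.carrier, IsActHom P B h ∧ g ∘ h = f

/-- An `S`-act `F` is free if it is isomorphic to a disjoint union (coproduct) of copies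
of the `S`-act `S` (here realized as `ι × S` with action `(i, x)·s = (i, x * s)`). -/
def IsFreeAct {S : Type u} [Monoid S] (F : SAct S) : Prop :=
  ∃ (ι : Type u) (f : F.carrier → ι × S), Function.Bijective f ∧
    ∀ (a : F.carrier) (s : S), f (F.act a s) = ((f a).1, (f a).2 * s)

/-- Let `S` be a commutative monoid. Then every projective right `S`-act
is free if and only if `E(S) = {1}`, where `E(S)` is the set of idempotents of `S`. -/
theorem projective_free_iff_idempotents {S : Type u} [CommMonoid S] :
    (∀ P : SAct S, IsProjectiveAct P → IsFreeAct P) ↔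
      ({e : S | e * e = e} = {1}) := by
  constructor
  · intro H
    ext e
    simp only [Set.mem_setOf_eq, Set.mem_singleton_iff]
    constructor
    · intro he
      -- The act `eS`, realized as the subtype of elements fixed by `e`.
      set P : SAct S :=
        { carrier := {x : S // e * x = x}
          act := fun a s => ⟨a.1 * s, by rw [← mul_assoc, a.2]⟩
          act_one := fun a => by simp
          act_mul := fun a s t => by simp [mul_assoc] } with hP
      have heP : e * e = e := he
      have hproj : IsProjectiveAct P := by
        intro B C g hg hsurj f hf
        obtain ⟨b, hb⟩ := hsurj (f ⟨e, heP⟩)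
        refine ⟨fun a => B.act b a.1, fun a s => by exact B.act_mul b a.1 s, ?_⟩
        funext a
        have h1 : P.act ⟨e, heP⟩ a.1 = a := Subtype.ext a.2
        have h2 : f (P.act ⟨e, heP⟩ a.1) = C.act (f ⟨e, heP⟩) a.1 := hf _ _
        simp only [Function.comp_apply]
        rw [hg b a.1, hb, ← h2, h1]
      obtain ⟨ι, fb, hbij, hact⟩ := H P hproj
      set x : S := (fb ⟨e, heP⟩).2 with hx
      set i : ι := (fb ⟨e, heP⟩).1 with hi
      -- `x * e = x` since `⟨e⟩ · e = ⟨e⟩`.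
      have hxe : x * e = x := by
        have h1 : P.act ⟨e, heP⟩ e = ⟨e, heP⟩ := Subtype.ext heP
        have h2 := hact ⟨e, heP⟩ e
        rw [h1] at h2
        exact (congrArg Prod.snd h2).symm
      -- surjectivity onto `(i, 1)` gives a right inverse of `x`.
      obtain ⟨a, ha⟩ := hbij.2 (i, 1)
      have haa : P.act ⟨e, heP⟩ a.1 = a := Subtype.ext a.2
      have h3 := hact ⟨e, heP⟩ a.1
      rw [haa, ha] at h3
      have hxy : x * a.1 = 1 := (congrArg Prod.snd h3).symm
      calc e = (a.1 * x) * e := by rw [mul_comm a.1 x, hxy, one_mul]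
        _ = a.1 * (x * e) := mul_assoc _ _ _
        _ = a.1 * x := by rw [hxe]
        _ = 1 := by rw [mul_comm, hxy]
    · intro he; rw [he]; exact one_mul 1
  · intro hE P hP
    -- `P` is a retract of the free act `P × S`.
    set F : SAct S :=
      { carrier := P.carrier × S
        act := fun a s => (a.1, a.2 * s)
        act_one := by simp
        act_mul := fun a s t => by simp [mul_assoc] } with hF
    have hg : IsActHom F P (fun a => P.act a.1 a.2) := by
      intro a s
      show P.act a.1 (a.2 * s) = P.act (P.act a.1 a.2) s
      exact P.act_mul a.1 a.2 s
    have hsurj : Function.Surjective (fun a : F.carrier => P.act a.1 a.2) :=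
      fun p => ⟨(p, 1), P.act_one p⟩
    obtain ⟨h, hh, hgh⟩ := hP F P _ hg hsurj id (fun a s => rfl)
    have hgh' : ∀ p, P.act (h p).1 (h p).2 = p := fun p => congrFun hgh p
    have hh1 : ∀ p s, (h (P.act p s)).1 = (h p).1 := by
      intro p s; rw [hh p s]
    have hh2 : ∀ p s, (h (P.act p s)).2 = (h p).2 * s := by
      intro p s; rw [hh p s]
    have hpipi : ∀ p, (h ((h p).1)).1 = (h p).1 := by
      intro p
      conv_rhs => rw [← hgh' p]
      rw [hh1]
    -- for fixed points `q` of π, `σ q` is idempotent, hence 1.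
    have hsig1 : ∀ q, (h q).1 = q → (h q).2 = 1 := by
      intro q hq
      have hq2 : P.act q (h q).2 = q := by
        have := hgh' q; rw [hq] at this; exact this
      have hidem : (h q).2 * (h q).2 = (h q).2 := by
        have := hh2 q (h q).2
        rw [hq2] at this
        exact this.symm
      have : (h q).2 ∈ ({e : S | e * e = e} : Set S) := hidem
      rw [hE] at this
      exact this
    refine ⟨{q : P.carrier // (h q).1 = q},
      fun p => (⟨(h p).1, hpipi p⟩, (h p).2), ⟨?_, ?_⟩, ?_⟩
    · intro p p' hpp
      simp only [Prod.mk.injEq, Subtype.mk.injEq] at hpp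
      obtain ⟨h1, h2⟩ := hpp
      rw [← hgh' p, ← hgh' p', h1, h2]
    · rintro ⟨⟨q, hq⟩, s⟩
      refine ⟨P.act q s, ?_⟩
      have e1 : (h (P.act q s)).1 = q := by rw [hh1, hq]
      have e2 : (h (P.act q s)).2 = s := by rw [hh2, hsig1 q hq, one_mul]
      exact Prod.ext (Subtype.ext e1) e2
    · intro a s
      exact Prod.ext (Subtype.ext (hh1 a s)) (hh2 a s)
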